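/- In a weakly bridged graph G, if an edge zz' lies in the sphere S_i(σ) around a clique σ, then there exists a vertex v ∈ B_{i-1}(σ) adjacent to both z and z', and a vertex w ∈ σ with d(v,w) = i-1. -/

import Mathlib

private lemma step_lemma {V : Type*} {G : SimpleGraph V} (hconn : G.Connected)
    {z w : V} {i : ℕ} (hi : 1 ≤ i) (hd : G.dist z w = i) :
    ∃ v, G.Adj z v ∧ G.dist v w = i - 1 := by
  obtain ⟨p, hp⟩ := SimpleGraph.exists_walk_of_dist_ne_zero (by omega : G.dist z w ≠ 0)
  cases p with
  | nil => simp at hp; rw [SimpleGraph.dist_self] at hd; omega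
  | @cons _ v _ h q =>
      refine ⟨v, h, ?_⟩
      have h1 : G.dist v w ≤ q.length := SimpleGraph.dist_le q
      have h2 : G.dist z w ≤ G.dist z v + G.dist v w := hconn.dist_triangle
      have h3 : G.dist z v = 1 := SimpleGraph.dist_eq_one_iff_adj.mpr h
      simp only [SimpleGraph.Walk.length_cons] at hp
      omega

theorem stmt8 {V : Type*} (G : SimpleGraph V) (hconn : G.Connected)
    (tri : ∀ u v w : V, G.Adj v w → G.dist u v = G.dist u w →
      ∃ x, G.Adj v x ∧ G.Adj w x ∧ G.dist u x + 1 = G.dist u v)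
    (quad : ∀ u v w z : V, G.Adj v z → G.Adj w z → G.dist v w = 2 →
      G.dist u v = G.dist u w → G.dist u z = G.dist u v + 1 →
      ∃ x, G.Adj v x ∧ G.Adj w x ∧ G.dist u x + 1 = G.dist u v)
    (noC4 : ¬ ∃ a b c d : V, a ≠ c ∧ b ≠ d ∧ G.Adj a b ∧ G.Adj b c ∧ G.Adj c d ∧
      G.Adj d a ∧ ¬ G.Adj a c ∧ ¬ G.Adj b d)
    (σ : Set V) (hσne : σ.Nonempty) (hσ : σ.Pairwise G.Adj)
    (i : ℕ) (hi : 1 ≤ i) (z z' : V) (hzz' : G.Adj z z')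
    (hz : (∀ w ∈ σ, i ≤ G.dist z w) ∧ ∃ w ∈ σ, G.dist z w = i)
    (hz' : (∀ w ∈ σ, i ≤ G.dist z' w) ∧ ∃ w ∈ σ, G.dist z' w = i) :
    ∃ v w : V, w ∈ σ ∧ G.Adj v z ∧ G.Adj v z' ∧
      (∃ w' ∈ σ, G.dist v w' ≤ i - 1) ∧ G.dist v w = i - 1 := by
  obtain ⟨hzall, w, hw, hdzw⟩ := hz
  obtain ⟨hz'all, w', hw', hdz'w'⟩ := hz'
  have hdzz' : G.dist z z' = 1 := SimpleGraph.dist_eq_one_iff_adj.mpr hzz'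
  have hdz'z : G.dist z' z = 1 := by rw [SimpleGraph.dist_comm]; exact hdzz'
  have hwz : G.dist w z = i := by rw [SimpleGraph.dist_comm]; exact hdzw
  have hw'z'c : G.dist w' z' = i := by rw [SimpleGraph.dist_comm]; exact hdz'w'
  -- d(z', w) is i or i+1
  have hz'w_le : G.dist z' w ≤ i + 1 := by
    have := hconn.dist_triangle (u := z') (v := z) (w := w); omega
  have hz'w_ge : i ≤ G.dist z' w := hz'all w hw
  have hwz' : G.dist w z' = G.dist z' w := SimpleGraph.dist_comm
  by_cases hA : G.dist z' w = i
  · -- triangle condition at w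
    obtain ⟨x, hxz, hxz', hx⟩ := tri w z z' hzz' (by omega)
    exact ⟨x, w, hw, hxz.symm, hxz'.symm,
      ⟨w, hw, by rw [SimpleGraph.dist_comm]; omega⟩,
      by rw [SimpleGraph.dist_comm]; omega⟩
  have hz'w : G.dist z' w = i + 1 := by omega
  -- d(z, w') is i or i+1
  have hzw'_le : G.dist z w' ≤ i + 1 := by
    have := hconn.dist_triangle (u := z) (v := z') (w := w'); omega
  have hzw'_ge : i ≤ G.dist z w' := hzall w' hw'
  have hw'zc : G.dist w' z = G.dist z w' := SimpleGraph.dist_comm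
  by_cases hB : G.dist z w' = i
  · obtain ⟨x, hxz, hxz', hx⟩ := tri w' z z' hzz' (by omega)
    exact ⟨x, w', hw', hxz.symm, hxz'.symm,
      ⟨w', hw', by rw [SimpleGraph.dist_comm]; omega⟩,
      by rw [SimpleGraph.dist_comm]; omega⟩
  have hzw' : G.dist z w' = i + 1 := by omega
  -- w ≠ w', so adjacent in the clique
  have hww' : G.Adj w w' := by
    refine hσ hw hw' ?_
    rintro rfl; omega
  have hdww' : G.dist w w' = 1 := SimpleGraph.dist_eq_one_iff_adj.mpr hww'
  -- neighbor of z towards w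
  obtain ⟨v₁, hzv₁, hv₁w⟩ := step_lemma hconn hi hdzw
  have hdzv₁ : G.dist z v₁ = 1 := SimpleGraph.dist_eq_one_iff_adj.mpr hzv₁
  have hv₁w' : G.dist v₁ w' = i := by
    have h1 : G.dist v₁ w' ≤ G.dist v₁ w + G.dist w w' := hconn.dist_triangle
    have h2 : G.dist z w' ≤ G.dist z v₁ + G.dist v₁ w' := hconn.dist_triangle
    omega
  have hv₁z'_le : G.dist v₁ z' ≤ 2 := by
    have h1 : G.dist v₁ z' ≤ G.dist v₁ z + G.dist z z' := hconn.dist_triangle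
    have h2 : G.dist v₁ z = 1 := by rw [SimpleGraph.dist_comm]; exact hdzv₁
    omega
  have hv₁z'_ne0 : G.dist v₁ z' ≠ 0 := by
    intro h0
    have : v₁ = z' := hconn.dist_eq_zero_iff.mp h0
    rw [this] at hv₁w; omega
  by_cases hC : G.Adj v₁ z'
  · exact ⟨v₁, w, hw, hzv₁.symm, hC,
      ⟨w, hw, le_of_eq hv₁w⟩, hv₁w⟩
  have hv₁z' : G.dist v₁ z' = 2 := by
    have : G.dist v₁ z' ≠ 1 := fun h => hC (SimpleGraph.dist_eq_one_iff_adj.mp h)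
    omega
  -- quad at w'
  have hw'v₁ : G.dist w' v₁ = i := by rw [SimpleGraph.dist_comm]; exact hv₁w'
  have hw'z' : G.dist w' z' = i := by rw [SimpleGraph.dist_comm]; exact hdz'w'
  have hw'z : G.dist w' z = i + 1 := by rw [SimpleGraph.dist_comm]; exact hzw'
  obtain ⟨x, hv₁x, hz'x, hx⟩ := quad w' v₁ z' z hzv₁.symm hzz'.symm hv₁z'
    (by omega) (by omega)
  have hw'x : G.dist w' x = i - 1 := by omega
  by_cases hD : G.Adj x z
  · exact ⟨x, w', hw', hD, hz'x.symm,
      ⟨w', hw', by rw [SimpleGraph.dist_comm]; omega⟩,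
      by rw [SimpleGraph.dist_comm]; omega⟩
  exfalso
  apply noC4
  refine ⟨z, v₁, x, z', ?_, ?_, hzv₁, hv₁x, hz'x.symm, hzz'.symm, ?_, ?_⟩
  · rintro rfl; omega
  · rintro rfl; omega
  · exact fun h => hD h.symm
  · intro h
    have := SimpleGraph.dist_eq_one_iff_adj.mpr h
    omega
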